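/- Every pre-spectral space X is (isomorphic to) the limit, in the category of pre-spectral spaces and spectral maps, of a projective system of Noetherian spaces; specifically, of the system indexed by the finite subsets K of the compact opens of X ordered by inclusion, where X_K is X with the topology generated by K and the bonding maps are the identity maps. -/

import Mathlib

open Set TopologicalSpace

/-- A bounded sublattice of the powerset of `X`. -/
def IsBoundedSublattice {X : Type*} (L : Set (Set X)) : Prop :=
  ∅ ∈ L ∧ Set.univ ∈ L ∧ (∀ U ∈ L, ∀ V ∈ L, U ∪ V ∈ L) ∧ ∀ U ∈ L, ∀ V ∈ L, U ∩ V ∈ L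

/-- A topology is pre-spectral if its compact open sets form a bounded
sublattice of the powerset that generates the topology. -/
def IsPreSpectral {X : Type*} (t : TopologicalSpace X) : Prop :=
  IsBoundedSublattice {U : Set X | @IsCompact X t U ∧ t.IsOpen U} ∧
  TopologicalSpace.generateFrom {U : Set X | @IsCompact X t U ∧ t.IsOpen U} = t

/-- A spectral map w.r.t. explicit topologies. -/
def IsSpectralTo {A B : Type*} (tA : TopologicalSpace A) (tB : TopologicalSpace B)
    (f : A → B) : Prop :=
  @Continuous A B tA tB f ∧
    ∀ V : Set B, @IsCompact B tB V → tB.IsOpen V →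
      @IsCompact A tA (f ⁻¹' V) ∧ tA.IsOpen (f ⁻¹' V)

lemma lattice_sInter {X : Type*} {L : Set (Set X)} (hL : IsBoundedSublattice L)
    {T : Set (Set X)} (hT : T.Finite) : T ⊆ L → ⋂₀ T ∈ L := by
  refine Set.Finite.induction_on T hT (fun _ => by simpa using hL.2.1) ?_
  intro a s _ _ ih hsub
  rw [sInter_insert]
  exact hL.2.2.2 _ (hsub (mem_insert _ _)) _ (ih fun x hx => hsub (mem_insert_of_mem _ hx))

lemma lattice_sUnion {X : Type*} {L : Set (Set X)} (hL : IsBoundedSublattice L)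
    {T : Set (Set X)} (hT : T.Finite) : T ⊆ L → ⋃₀ T ∈ L := by
  refine Set.Finite.induction_on T hT (fun _ => by simpa using hL.1) ?_
  intro a s _ _ ih hsub
  rw [sUnion_insert]
  exact hL.2.2.1 _ (hsub (mem_insert _ _)) _ (ih fun x hx => hsub (mem_insert_of_mem _ hx))

/-- Every open of a topology generated by `G` is a union of finite intersections. -/
lemma open_generateFrom_structure {X : Type*} (G : Set (Set X)) (s : Set X)
    (hs : GenerateOpen G s) :
    ∃ S : Set (Set X), S ⊆ (fun T : Set (Set X) => ⋂₀ T) '' {T | T ⊆ G ∧ T.Finite} ∧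
      s = ⋃₀ S := by
  induction hs with
  | basic u hu =>
    refine ⟨({u} : Set (Set X)), ?_, by simp⟩
    rintro x rfl
    exact ⟨{x}, ⟨by simpa using hu, finite_singleton _⟩, by simp⟩
  | univ =>
    refine ⟨({univ} : Set (Set X)), ?_, by simp⟩
    rintro x rfl
    exact ⟨∅, ⟨by simp, finite_empty⟩, by simp⟩
  | inter u v _ _ ihu ihv =>
    obtain ⟨S, hS, rfl⟩ := ihu
    obtain ⟨S', hS', rfl⟩ := ihv
    refine ⟨(fun p : Set X × Set X => p.1 ∩ p.2) '' (S ×ˢ S'), ?_, ?_⟩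
    · rintro _ ⟨⟨a, b⟩, ⟨ha, hb⟩, rfl⟩
      obtain ⟨T, ⟨hT1, hT2⟩, rfl⟩ := hS ha
      obtain ⟨T', ⟨hT1', hT2'⟩, rfl⟩ := hS' hb
      exact ⟨T ∪ T', ⟨union_subset hT1 hT1', hT2.union hT2'⟩,
        by simp [sInter_union]⟩
    · ext x
      simp only [mem_inter_iff, mem_sUnion, mem_image, mem_prod, Prod.exists]
      constructor
      · rintro ⟨⟨a, ha, hxa⟩, ⟨b, hb, hxb⟩⟩
        exact ⟨a ∩ b, ⟨a, b, ⟨ha, hb⟩, rfl⟩, hxa, hxb⟩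
      · rintro ⟨_, ⟨a, b, ⟨ha, hb⟩, rfl⟩, hx⟩
        exact ⟨⟨a, ha, hx.1⟩, ⟨b, hb, hx.2⟩⟩
  | sUnion ss _ ih =>
    choose F hF1 hF2 using fun s : ss => ih s s.2
    refine ⟨⋃ s : ss, F s, iUnion_subset fun s => hF1 s, ?_⟩
    rw [sUnion_iUnion, sUnion_eq_iUnion]
    exact iUnion_congr fun s => hF2 s

lemma noetherian_of_finite_generate {X : Type*} (K : Finset (Set X)) :
    @NoetherianSpace X (generateFrom (↑K : Set (Set X))) := by
  letI := generateFrom (↑K : Set (Set X))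
  have hI : ((fun T : Set (Set X) => ⋂₀ T) '' {T | T ⊆ (↑K : Set (Set X)) ∧ T.Finite}).Finite :=
    Set.Finite.image _ ((K.finite_toSet.finite_subsets).subset fun T hT => hT.1)
  have hopens : {s : Set X | IsOpen s}.Finite := by
    apply ((hI.finite_subsets.image (fun S : Set (Set X) => ⋃₀ S))).subset
    rintro s hs
    obtain ⟨S, hS, rfl⟩ := open_generateFrom_structure _ s hs
    exact ⟨S, hS, rfl⟩
  haveI : Finite {s : Set X | IsOpen s} := hopens.to_subtype
  haveI : Finite (Opens X) := by
    apply Finite.of_injective (fun U : Opens X => (⟨U.1, U.2⟩ : {s : Set X | IsOpen s}))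
    intro a b h
    exact Opens.ext (congrArg Subtype.val h)
  exact ⟨(Finite.to_wellFoundedGT).wf⟩

universe u

set_option maxHeartbeats 1000000 in
theorem prespectral_is_limit_of_noetherian {X : Type u} (t : TopologicalSpace X)
    (hX : IsPreSpectral t) :
    (∀ K : Finset (Set X),
      ↑K ⊆ {U : Set X | @IsCompact X t U ∧ t.IsOpen U} →
      @NoetherianSpace X (generateFrom (↑K : Set (Set X)))) ∧
    (∀ K : Finset (Set X),
      ↑K ⊆ {U : Set X | @IsCompact X t U ∧ t.IsOpen U} →
      IsSpectralTo t (generateFrom (↑K : Set (Set X))) id) ∧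
    (∀ K K' : Finset (Set X),
      ↑K ⊆ {U : Set X | @IsCompact X t U ∧ t.IsOpen U} →
      ↑K' ⊆ {U : Set X | @IsCompact X t U ∧ t.IsOpen U} → K' ⊆ K →
      IsSpectralTo (generateFrom (↑K : Set (Set X)))
        (generateFrom (↑K' : Set (Set X))) id) ∧
    (∀ (Z : Type u) (tZ : TopologicalSpace Z), IsPreSpectral tZ →
      ∀ g : Finset (Set X) → Z → X,
      (∀ K : Finset (Set X), ↑K ⊆ {U : Set X | @IsCompact X t U ∧ t.IsOpen U} →
        IsSpectralTo tZ (generateFrom (↑K : Set (Set X))) (g K)) →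
      (∀ K K' : Finset (Set X),
        ↑K ⊆ {U : Set X | @IsCompact X t U ∧ t.IsOpen U} →
        ↑K' ⊆ {U : Set X | @IsCompact X t U ∧ t.IsOpen U} → K' ⊆ K → g K = g K') →
      ∃! m : Z → X, IsSpectralTo tZ t m ∧
        ∀ K : Finset (Set X), ↑K ⊆ {U : Set X | @IsCompact X t U ∧ t.IsOpen U} →
          g K = m) := by
  set C := {U : Set X | @IsCompact X t U ∧ t.IsOpen U} with hC
  -- every `generateFrom ↑K`-open set lies in the lattice `C`
  have key : ∀ K : Finset (Set X), ↑K ⊆ C → ∀ V : Set X,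
      (generateFrom (↑K : Set (Set X))).IsOpen V → V ∈ C := by
    intro K hK V hV
    obtain ⟨S, hS, rfl⟩ := open_generateFrom_structure (↑K : Set (Set X)) V hV
    have hI : ((fun T : Set (Set X) => ⋂₀ T) '' {T | T ⊆ (↑K : Set (Set X)) ∧ T.Finite}).Finite :=
      Set.Finite.image _ ((K.finite_toSet.finite_subsets).subset fun T hT => hT.1)
    refine lattice_sUnion hX.1 (hI.subset hS) ?_
    intro s hs
    obtain ⟨T, ⟨hT1, hT2⟩, rfl⟩ := hS hs
    exact lattice_sInter hX.1 hT2 fun x hx => hK (hT1 hx)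
  refine ⟨fun K _ => noetherian_of_finite_generate K, ?_, ?_, ?_⟩
  · -- id : (X, t) → (X, gen K) spectral
    intro K hK
    refine ⟨continuous_id_iff_le.2 (le_generateFrom fun s hs => (hK hs).2), ?_⟩
    intro V _ hVo
    have hVC : V ∈ C := key K hK V hVo
    exact hVC
  · -- id : (X, gen K) → (X, gen K') spectral for K' ⊆ K
    intro K K' _ _ hsub
    have hle : generateFrom (↑K : Set (Set X)) ≤ generateFrom (↑K' : Set (Set X)) :=
      le_generateFrom fun s hs =>
        isOpen_generateFrom_of_mem (Finset.coe_subset.2 hsub hs)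
    refine ⟨continuous_id_iff_le.2 hle, ?_⟩
    intro V _ hVo
    exact ⟨by simpa using @NoetherianSpace.isCompact X (generateFrom (↑K : Set (Set X))) (noetherian_of_finite_generate K) V,
      hle V hVo⟩
  · -- universal property
    intro Z tZ _ g hg hcomp
    have hempty : (↑(∅ : Finset (Set X)) : Set (Set X)) ⊆ C := by simp
    have hgm : ∀ K : Finset (Set X), ↑K ⊆ C → g K = g ∅ := fun K hK =>
      hcomp K ∅ hK hempty (Finset.empty_subset K)
    refine ⟨g ∅, ⟨⟨?_, ?_⟩, fun K hK => hgm K hK⟩, ?_⟩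
    · -- continuity of g ∅ : Z → (X, t)
      have : @Continuous Z X tZ (generateFrom C) (g ∅) := by
        refine continuous_generateFrom_iff.2 fun U hU => ?_
        have hKU : (↑({U} : Finset (Set X)) : Set (Set X)) ⊆ C := by
          simpa using hU
        have hspec := hg {U} hKU
        have hUopen : (generateFrom (↑({U} : Finset (Set X)) : Set (Set X))).IsOpen U :=
          isOpen_generateFrom_of_mem (by simp)
        have := @Continuous.isOpen_preimage Z X tZ (generateFrom (↑({U} : Finset (Set X)) : Set (Set X))) (g {U}) hspec.1 U hUopen
        rwa [hgm {U} hKU] at this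
      rwa [hX.2] at this
    · -- spectrality of g ∅
      intro V hVc hVo
      have hKV : (↑({V} : Finset (Set X)) : Set (Set X)) ⊆ C := by
        simpa using ⟨hVc, hVo⟩
      have hspec := hg {V} hKV
      have hVc' : @IsCompact X (generateFrom (↑({V} : Finset (Set X)) : Set (Set X))) V :=
        @NoetherianSpace.isCompact X (generateFrom (↑({V} : Finset (Set X)) : Set (Set X))) (noetherian_of_finite_generate ({V} : Finset (Set X))) V
      have hVo' : (generateFrom (↑({V} : Finset (Set X)) : Set (Set X))).IsOpen V :=
        isOpen_generateFrom_of_mem (by simp)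
      have := hspec.2 V hVc' hVo'
      rwa [hgm {V} hKV] at this
    · rintro m' ⟨_, hm'⟩
      exact (hm' ∅ hempty).symm
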